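/- Let p be a positive integer, q an integer with gcd(q, 2p) = 1, and s any integer, and suppose p and q are odd. Then (1/(2p)) · Σ_{λ ∈ ℂ, λ^{2p} = 1, λ ≠ 1} (λ^s − λ^{s+p})·λ^q / ((λ^q − 1)(λ − 1)) = (1/p) · Σ_{μ ∈ ℂ, μ^p = 1} (−1)^{s+1} μ^{s+q} / ((μ^q + 1)(μ + 1)), with all denominators nonzero. (This is the paper's closed formula for the η-invariant η(X(p), g_{p,q}, α_s) of the flip-spun lens space.) -/

import Mathlib

/-- The paper's closed formula for the η-invariant `η(X(p), g_{p,q}, α_s)` of the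
flip-spun lens space, for `p` and `q` odd; all denominators are nonzero. -/
theorem stmt7 (p : ℕ) (hp : 0 < p) (hpodd : Odd p) (q : ℤ) (hq : Int.gcd q (2 * p) = 1)
    (hqodd : Odd q) (s : ℤ) :
    (∀ z : ℂ, z ^ (2 * p) = 1 → z ≠ 1 → z ^ q - 1 ≠ 0 ∧ z - 1 ≠ 0) ∧
    (∀ z : ℂ, z ^ p = 1 → z ^ q + 1 ≠ 0 ∧ z + 1 ≠ 0) ∧
    (1 / (2 * p : ℂ)) *
        ∑ᶠ z ∈ {z : ℂ | z ^ (2 * p) = 1 ∧ z ≠ 1},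
          (z ^ s - z ^ (s + (p : ℤ))) * z ^ q / ((z ^ q - 1) * (z - 1))
      = (1 / (p : ℂ)) *
        ∑ᶠ z ∈ {z : ℂ | z ^ p = 1},
          (-1 : ℂ) ^ (s + 1) * z ^ (s + q) / ((z ^ q + 1) * (z + 1)) := by
  classical
  have hp2 : 0 < 2 * p := by omega
  have hpC : (p : ℂ) ≠ 0 := Nat.cast_ne_zero.mpr hp.ne'
  have hcoq : IsCoprime q (2 * (p : ℤ)) := Int.isCoprime_iff_gcd_eq_one.mpr hq
  have aux : ∀ z : ℂ, z ≠ 0 → ∀ a b : ℤ, IsCoprime a b → z ^ a = 1 → z ^ b = 1 → z = 1 := by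
    rintro z hz0 a b ⟨u, v, huv⟩ ha hb
    calc z = z ^ (u * a + v * b) := by rw [huv, zpow_one]
    _ = (z ^ a) ^ u * (z ^ b) ^ v := by
        rw [zpow_add₀ hz0, mul_comm u a, mul_comm v b, zpow_mul, zpow_mul]
    _ = 1 := by rw [ha, hb, one_zpow, one_zpow, one_mul]
  have hne0_2p : ∀ z : ℂ, z ^ (2 * p) = 1 → z ≠ 0 := by
    intro z hz h0
    rw [h0, zero_pow hp2.ne'] at hz
    exact zero_ne_one hz
  have hne0_p : ∀ z : ℂ, z ^ p = 1 → z ≠ 0 := by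
    intro z hz h0
    rw [h0, zero_pow hp.ne'] at hz
    exact zero_ne_one hz
  have key1 : ∀ z : ℂ, z ^ (2 * p) = 1 → z ≠ 1 → z ^ q - 1 ≠ 0 ∧ z - 1 ≠ 0 := by
    intro z hz hz1
    refine ⟨?_, sub_ne_zero_of_ne hz1⟩
    intro h
    apply hz1
    refine aux z (hne0_2p z hz) q (2 * (p : ℤ)) hcoq (sub_eq_zero.mp h) ?_
    have : z ^ ((2 * p : ℕ) : ℤ) = 1 := by rw [zpow_natCast]; exact hz
    simpa using this
  have hqp : IsCoprime q ((p : ℤ)) := by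
    exact hcoq.of_mul_right_right
  have h2p : IsCoprime (2 : ℤ) ((p : ℤ)) := by
    rw [Int.isCoprime_iff_gcd_eq_one, show ((2 : ℤ)) = ((2 : ℕ) : ℤ) by norm_num,
      Int.gcd_natCast_natCast]
    exact Nat.coprime_two_left.mpr hpodd
  have hp2q : IsCoprime ((p : ℤ)) (2 * q) := h2p.symm.mul_right hqp.symm
  have key2 : ∀ z : ℂ, z ^ p = 1 → z ^ q + 1 ≠ 0 ∧ z + 1 ≠ 0 := by
    intro z hz
    have hz0 : z ≠ 0 := hne0_p z hz
    have hzp : z ^ ((p : ℕ) : ℤ) = 1 := by rw [zpow_natCast]; exact hz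
    constructor
    · intro h
      have hzq : z ^ q = -1 := eq_neg_of_add_eq_zero_left h
      have h2q : z ^ (2 * q) = 1 := by
        rw [mul_comm, zpow_mul, hzq]
        norm_num
      have hz1 : z = 1 := aux z hz0 (p : ℤ) (2 * q) hp2q hzp h2q
      rw [hz1, one_zpow] at hzq
      norm_num at hzq
    · intro h
      have hz1 : z = -1 := eq_neg_of_add_eq_zero_left h
      rw [hz1, hpodd.neg_pow, one_pow] at hz
      norm_num at hz
  refine ⟨key1, key2, ?_⟩
  have hset1 : {z : ℂ | z ^ (2 * p) = 1 ∧ z ≠ 1}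
      = ↑((Polynomial.nthRootsFinset (2 * p) (1 : ℂ)).filter (fun z => z ≠ 1)) := by
    ext z
    simp [Polynomial.mem_nthRootsFinset hp2]
  have hset2 : {z : ℂ | z ^ p = 1} = ↑(Polynomial.nthRootsFinset p (1 : ℂ)) := by
    ext z
    simp [Polynomial.mem_nthRootsFinset hp]
  rw [hset1, hset2, finsum_mem_coe_finset, finsum_mem_coe_finset]
  have hstep1 : ∑ z ∈ (Polynomial.nthRootsFinset (2 * p) (1 : ℂ)).filter (fun z => z ≠ 1),
        (z ^ s - z ^ (s + (p : ℤ))) * z ^ q / ((z ^ q - 1) * (z - 1))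
      = ∑ z ∈ Polynomial.nthRootsFinset (2 * p) (1 : ℂ),
        (z ^ s - z ^ (s + (p : ℤ))) * z ^ q / ((z ^ q - 1) * (z - 1)) := by
    apply Finset.sum_filter_of_ne
    intro x _ hf hx1
    apply hf
    rw [hx1]
    simp
  have hstep2 : ∑ z ∈ (Polynomial.nthRootsFinset (2 * p) (1 : ℂ)).filter (fun z => z ^ p = -1),
        (z ^ s - z ^ (s + (p : ℤ))) * z ^ q / ((z ^ q - 1) * (z - 1))
      = ∑ z ∈ Polynomial.nthRootsFinset (2 * p) (1 : ℂ),
        (z ^ s - z ^ (s + (p : ℤ))) * z ^ q / ((z ^ q - 1) * (z - 1)) := by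
    apply Finset.sum_filter_of_ne
    intro x hx hf
    rw [Polynomial.mem_nthRootsFinset hp2] at hx
    have hsq : (x ^ p) ^ 2 = x ^ (2 * p) := by rw [← pow_mul, mul_comm]
    have hmul : (x ^ p - 1) * (x ^ p + 1) = 0 := by linear_combination hsq + hx
    rcases mul_eq_zero.mp hmul with h | h
    · exfalso
      apply hf
      have hxp : x ^ p = 1 := by linear_combination h
      have hx0 : x ≠ 0 := hne0_2p x hx
      have : x ^ (s + (p : ℤ)) = x ^ s := by
        rw [zpow_add₀ hx0, zpow_natCast, hxp, mul_one]
      rw [this]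
      simp
    · linear_combination h
  have hstep3 : ∑ z ∈ (Polynomial.nthRootsFinset (2 * p) (1 : ℂ)).filter (fun z => z ^ p = -1),
        (z ^ s - z ^ (s + (p : ℤ))) * z ^ q / ((z ^ q - 1) * (z - 1))
      = ∑ z ∈ Polynomial.nthRootsFinset p (1 : ℂ),
        2 * ((-1 : ℂ) ^ (s + 1) * z ^ (s + q) / ((z ^ q + 1) * (z + 1))) := by
    apply Finset.sum_nbij' (fun z => -z) (fun z => -z)
    · intro a ha
      rw [Finset.mem_filter, Polynomial.mem_nthRootsFinset hp2] at ha
      rw [Polynomial.mem_nthRootsFinset hp, hpodd.neg_pow, ha.2]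
      ring
    · intro a ha
      rw [Polynomial.mem_nthRootsFinset hp] at ha
      rw [Finset.mem_filter, Polynomial.mem_nthRootsFinset hp2]
      have h1 : (-a) ^ p = -1 := by rw [hpodd.neg_pow, ha]
      have h2 : (-a) ^ (2 * p) = ((-a) ^ p) ^ 2 := by rw [← pow_mul, mul_comm]
      rw [h2, h1]
      norm_num
    · intro a _; ring
    · intro a _; ring
    · intro z hz
      rw [Finset.mem_filter, Polynomial.mem_nthRootsFinset hp2] at hz
      obtain ⟨hz2p, hzp⟩ := hz
      have hz0 : z ≠ 0 := hne0_2p z hz2p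
      have hz1 : z ≠ 1 := by
        intro h
        rw [h, one_pow] at hzp
        norm_num at hzp
      obtain ⟨hd1, hd2⟩ := key1 z hz2p hz1
      have hpe : z ^ (s + (p : ℤ)) = -z ^ s := by
        rw [zpow_add₀ hz0, zpow_natCast, hzp]
        ring
      have hnq : (-z) ^ q = -z ^ q := by
        rw [show (-z) = (-1) * z by ring, mul_zpow, hqodd.neg_one_zpow]
        ring
      have hns : (-z) ^ (s + q) = (-1 : ℂ) ^ s * -z ^ (s + q) := by
        rw [show (-z) = (-1) * z by ring, mul_zpow,
          zpow_add₀ (show (-1 : ℂ) ≠ 0 by norm_num) s q, hqodd.neg_one_zpow]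
        ring
      have h4 : ((-1 : ℂ)) ^ (s + 1) = -(-1 : ℂ) ^ s := by
        rw [zpow_add₀ (show (-1 : ℂ) ≠ 0 by norm_num), zpow_one]
        ring
      have h5 : (-1 : ℂ) ^ s * (-1 : ℂ) ^ s = 1 := by
        rw [← mul_zpow]
        norm_num
      have hden : ((-z) ^ q + 1) * ((-z) + 1) = (z ^ q - 1) * (z - 1) := by
        rw [hnq]; ring
      rw [hden, hpe, hns, h4, mul_div_assoc' 2]
      congr 1
      have hzq : z ^ s * z ^ q = z ^ (s + q) := (zpow_add₀ hz0 s q).symm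
      linear_combination (-2) * z ^ (s + q) * h5 + 2 * hzq
  rw [hstep1, ← hstep2, hstep3, ← Finset.mul_sum]
  have h2pC : (2 * (p : ℂ)) ≠ 0 := mul_ne_zero two_ne_zero hpC
  field_simp
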